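/- Let p be an odd prime and x a p-adic integer. Then Γ_p(x)·Γ_p(1-x) = (-1)^{⟨-x⟩_p - 1}, where ⟨-x⟩_p ∈ {0,1,...,p-1} is the least nonnegative residue of -x modulo p. -/

import Mathlib

open Filter Topology Finset

section Aux
variable {p : ℕ} [Fact p.Prime]

private lemma pd_natCast (n : ℕ) : (p : PadicInt p) ∣ (n : PadicInt p) ↔ p ∣ n := by
  constructor
  · intro h
    have h2 : ((n : PadicInt p) : _) ∈ IsLocalRing.maximalIdeal (PadicInt p) := by
      rw [PadicInt.maximalIdeal_eq_span_p, Ideal.mem_span_singleton]; exact h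
    rw [← PadicInt.ker_toZMod, RingHom.mem_ker, map_natCast,
      ZMod.natCast_eq_zero_iff] at h2
    exact h2
  · intro h
    exact_mod_cast (Nat.cast_dvd_cast h : ((p:ℕ):PadicInt p) ∣ (n:ℕ))

private lemma nat_eq_of_pdvd {a b : ℕ} (ha : a < p) (hb : b < p)
    (h : (p : PadicInt p) ∣ (a : PadicInt p) - b) : a = b := by
  have h2 : ((a : PadicInt p) - b) ∈ IsLocalRing.maximalIdeal (PadicInt p) := by
    rw [PadicInt.maximalIdeal_eq_span_p, Ideal.mem_span_singleton]; exact h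
  rw [← PadicInt.ker_toZMod, RingHom.mem_ker, map_sub, map_natCast, map_natCast,
    sub_eq_zero] at h2
  have := congrArg ZMod.val h2
  rwa [ZMod.val_cast_of_lt ha, ZMod.val_cast_of_lt hb] at this

private lemma appr_one_eq {y : PadicInt p} {m : ℕ} (hm : m < p)
    (h : (p : PadicInt p) ∣ y - m) : y.appr 1 = m := by
  have hs := PadicInt.appr_spec 1 y
  rw [Ideal.mem_span_singleton, pow_one] at hs
  refine nat_eq_of_pdvd (by simpa using y.appr_lt 1) hm ?_
  have h3 := dvd_sub hs h
  have : y - ↑(y.appr 1) - (y - ↑m) = (m : PadicInt p) - y.appr 1 := by ring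
  rw [this] at h3
  rw [show (y.appr 1 : PadicInt p) - m = -((m:PadicInt p) - y.appr 1) by ring]
  exact dvd_neg.mpr h3

private lemma appr_spec_one (y : PadicInt p) : (p : PadicInt p) ∣ y - y.appr 1 := by
  have hs := PadicInt.appr_spec 1 y
  rwa [Ideal.mem_span_singleton, pow_one] at hs

private lemma tendsto_appr' (x : PadicInt p) :
    Tendsto (fun k : ℕ => ((x.appr k : ℕ) : PadicInt p)) atTop (𝓝 x) := by
  rw [tendsto_iff_norm_sub_tendsto_zero]
  refine squeeze_zero (g := fun k : ℕ => (p:ℝ)^(-(k:ℤ))) (fun k => norm_nonneg _)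
    (fun k => ?_) ?_
  · rw [show ((x.appr k : ℕ) : PadicInt p) - x = -(x - x.appr k) by ring, norm_neg]
    exact (PadicInt.norm_le_pow_iff_mem_span_pow _ k).mpr (x.appr_spec k)
  · have h1 : (p:ℝ)⁻¹ < 1 :=
      inv_lt_one_of_one_lt₀ (by exact_mod_cast (Fact.out : p.Prime).one_lt)
    have h2 := tendsto_pow_atTop_nhds_zero_of_lt_one (r := (p:ℝ)⁻¹) (by positivity) h1
    convert h2 using 2 with k
    rw [zpow_neg, zpow_natCast, inv_pow]

private lemma prod_step (n : ℕ) (hn : 1 ≤ n) :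
    ∏ j ∈ (Finset.Ico 1 (n+1)).filter (fun j => ¬ p ∣ j), (j : PadicInt p)
      = (if p ∣ n then 1 else (n : PadicInt p)) *
        ∏ j ∈ (Finset.Ico 1 n).filter (fun j => ¬ p ∣ j), (j : PadicInt p) := by
  rw [Nat.Ico_succ_right_eq_insert_Ico hn, Finset.filter_insert]
  by_cases h : p ∣ n
  · rw [if_neg (by simpa using h), if_pos h, one_mul]
  · rw [if_pos h, if_neg h, Finset.prod_insert (by simp)]

variable {G : PadicInt p → PadicInt p}
variable (hGval : ∀ n : ℕ, 0 < n →
      G n = (-1) ^ n * ∏ j ∈ (Finset.Ico 1 n).filter (fun j => ¬ p ∣ j), (j : PadicInt p))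

include hGval

private lemma G_one : G 1 = -1 := by
  have h := hGval 1 one_pos
  simpa using h

private lemma G_step_dvd' {n : ℕ} (hn : 1 ≤ n) (h : p ∣ n) : G (↑(n+1)) = -G n := by
  rw [hGval (n+1) (by omega), hGval n hn, prod_step n hn, if_pos h, pow_succ]
  ring

private lemma G_step_ndvd {n : ℕ} (h : ¬ p ∣ n) : G (↑(n+1)) = -(n : PadicInt p) * G n := by
  have hn : 1 ≤ n := by
    rcases Nat.eq_zero_or_pos n with h0 | h0
    · exact absurd (h0 ▸ dvd_zero p) h
    · exact h0
  rw [hGval (n+1) (by omega), hGval n hn, prod_step n hn, if_neg h, pow_succ]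
  ring

variable (hGc : Continuous G)
include hGc

private lemma G_zero : G 0 = 1 := by
  have hnp : ‖(p : PadicInt p)‖ < 1 := by
    rw [PadicInt.norm_p]
    exact inv_lt_one_of_one_lt₀ (by exact_mod_cast (Fact.out : p.Prime).one_lt)
  have h0 : Tendsto (fun k : ℕ => ((p:PadicInt p))^(k+1)) atTop (𝓝 0) :=
    (tendsto_pow_atTop_nhds_zero_of_norm_lt_one hnp).comp (tendsto_add_atTop_nat 1)
  have hs : Tendsto (fun k : ℕ => ((p^(k+1) : ℕ) : PadicInt p)) atTop (𝓝 0) := by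
    convert h0 using 2 with k
    push_cast; ring
  have key : ∀ k : ℕ, G (((p^(k+1) : ℕ) : PadicInt p) + 1) = -G ((p^(k+1) : ℕ) : PadicInt p) := by
    intro k
    have := G_step_dvd' hGval (Nat.one_le_pow _ _ (Fact.out : p.Prime).pos)
      (dvd_pow_self p (Nat.succ_ne_zero k))
    rw [Nat.cast_add, Nat.cast_one] at this
    exact this
  have A : Tendsto (fun k : ℕ => G (((p^(k+1) : ℕ) : PadicInt p) + 1)) atTop (𝓝 (G 1)) := by
    have := (hGc.tendsto (0 + 1 : PadicInt p)).comp (hs.add tendsto_const_nhds)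
    rwa [zero_add] at this
  have B : Tendsto (fun k : ℕ => -G ((p^(k+1) : ℕ) : PadicInt p)) atTop (𝓝 (-G 0)) :=
    ((hGc.tendsto 0).comp hs).neg
  have := tendsto_nhds_unique (A.congr (fun k => key k)) B
  rw [G_one hGval] at this
  exact (neg_injective this).symm

private lemma G_step_dvd {n : ℕ} (h : p ∣ n) : G (↑(n+1)) = -G n := by
  rcases Nat.eq_zero_or_pos n with h0 | h0
  · subst h0
    rw [show ((0:ℕ):PadicInt p) = 0 by simp, G_zero hGval hGc]
    simpa using G_one hGval
  · exact G_step_dvd' hGval h0 h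

private lemma G_fe_dvd {x : PadicInt p} (hx : (p : PadicInt p) ∣ x) :
    G (x + 1) = -G x := by
  set s : ℕ → PadicInt p := fun k => ((x.appr (k+1) : ℕ) : PadicInt p) with hsdef
  have hs : Tendsto s atTop (𝓝 x) := (tendsto_appr' x).comp (tendsto_add_atTop_nat 1)
  have key : ∀ k, G (s k + 1) = -G (s k) := by
    intro k
    have h1 : (p:PadicInt p) ∣ x - (x.appr (k+1) : ℕ) :=
      dvd_trans (dvd_pow_self _ (Nat.succ_ne_zero k))
        (Ideal.mem_span_singleton.mp (x.appr_spec (k+1)))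
    have hd : p ∣ x.appr (k+1) := by
      rw [← pd_natCast]
      have := dvd_sub hx h1
      simpa using this
    have := G_step_dvd hGval hGc hd
    rw [Nat.cast_add, Nat.cast_one] at this
    exact this
  have A : Tendsto (fun k => G (s k + 1)) atTop (𝓝 (G (x + 1))) :=
    (hGc.tendsto _).comp (hs.add tendsto_const_nhds)
  have B : Tendsto (fun k => -G (s k)) atTop (𝓝 (-G x)) := ((hGc.tendsto _).comp hs).neg
  exact tendsto_nhds_unique (A.congr key) B

private lemma G_fe_ndvd {x : PadicInt p} (hx : ¬ (p : PadicInt p) ∣ x) :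
    G (x + 1) = -x * G x := by
  set s : ℕ → PadicInt p := fun k => ((x.appr (k+1) : ℕ) : PadicInt p) with hsdef
  have hs : Tendsto s atTop (𝓝 x) := (tendsto_appr' x).comp (tendsto_add_atTop_nat 1)
  have key : ∀ k, G (s k + 1) = -(s k) * G (s k) := by
    intro k
    have h1 : (p:PadicInt p) ∣ x - (x.appr (k+1) : ℕ) :=
      dvd_trans (dvd_pow_self _ (Nat.succ_ne_zero k))
        (Ideal.mem_span_singleton.mp (x.appr_spec (k+1)))
    have hd : ¬ p ∣ x.appr (k+1) := by
      intro hd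
      apply hx
      rw [← pd_natCast] at hd
      have := dvd_add h1 hd
      simpa using this
    have := G_step_ndvd hGval hd
    rw [Nat.cast_add, Nat.cast_one] at this
    exact this
  have A : Tendsto (fun k => G (s k + 1)) atTop (𝓝 (G (x + 1))) :=
    (hGc.tendsto _).comp (hs.add tendsto_const_nhds)
  have B : Tendsto (fun k => -(s k) * G (s k)) atTop (𝓝 (-x * G x)) :=
    (hs.neg).mul ((hGc.tendsto _).comp hs)
  exact tendsto_nhds_unique (A.congr key) B

omit hGval hGc

private lemma appr_neg_zero_of_dvd {x : PadicInt p} (hx : (p : PadicInt p) ∣ x) :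
    (-x).appr 1 = 0 :=
  appr_one_eq (Fact.out : p.Prime).pos (by simpa using (dvd_neg.mpr hx))

private lemma appr_neg_succ_of_dvd {x : PadicInt p} (hx : (p : PadicInt p) ∣ x) :
    (-(x+1)).appr 1 = p - 1 := by
  have hp1 : 1 ≤ p := (Fact.out : p.Prime).pos
  refine appr_one_eq (by omega) ?_
  rw [Nat.cast_sub hp1]
  rw [show -(x+1) - ((p:PadicInt p) - (1:ℕ)) = -x - p by push_cast; ring]
  exact dvd_sub (dvd_neg.mpr hx) dvd_rfl

private lemma appr_neg_pos_of_ndvd {x : PadicInt p} (hx : ¬ (p : PadicInt p) ∣ x) :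
    1 ≤ (-x).appr 1 := by
  by_contra h
  have h0 : (-x).appr 1 = 0 := by omega
  apply hx
  have := appr_spec_one (-x)
  rw [h0] at this
  simpa using (dvd_neg.mp (by simpa using this))

private lemma appr_neg_succ_of_ndvd {x : PadicInt p} (hx : ¬ (p : PadicInt p) ∣ x) :
    (-(x+1)).appr 1 = (-x).appr 1 - 1 := by
  have ha1 : 1 ≤ (-x).appr 1 := appr_neg_pos_of_ndvd hx
  have hap : (-x).appr 1 < p := by simpa using (-x).appr_lt 1
  refine appr_one_eq (by omega) ?_
  rw [Nat.cast_sub ha1]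
  rw [show -(x+1) - (((-x).appr 1 : PadicInt p) - (1:ℕ)) = -x - (-x).appr 1 by push_cast; ring]
  exact appr_spec_one (-x)



private lemma main_nat {p : ℕ} [Fact p.Prime] (hp : Odd p)
    {G : PadicInt p → PadicInt p} (hGc : Continuous G)
    (hGval : ∀ n : ℕ, 0 < n →
      G n = (-1) ^ n * ∏ j ∈ (Finset.Ico 1 n).filter (fun j => ¬ p ∣ j), (j : PadicInt p)) :
    ∀ n : ℕ, G n * G (1 - (n : PadicInt p)) = (-1) ^ (((-(n : PadicInt p)).appr 1) + 1) := by
  intro n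
  induction n with
  | zero =>
    rw [Nat.cast_zero, G_zero hGval hGc, sub_zero, G_one hGval,
      appr_neg_zero_of_dvd (dvd_zero (p : PadicInt p))]
    norm_num
  | succ n ih =>
    set x : PadicInt p := (n : PadicInt p) with hxdef
    have hc : ((n+1 : ℕ) : PadicInt p) = x + 1 := by push_cast; ring
    rw [hc, show (1 : PadicInt p) - (x+1) = -x by ring]
    by_cases hx : (p : PadicInt p) ∣ x
    · have h1 : G (x+1) = -G x := G_fe_dvd hGval hGc hx
      have h2 : G (1 - x) = -G (-x) := by
        have := G_fe_dvd hGval hGc (dvd_neg.mpr hx)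
        rwa [show -x + 1 = 1 - x by ring] at this
      rw [appr_neg_succ_of_dvd hx, h1]
      have ha : (-x).appr 1 = 0 := appr_neg_zero_of_dvd hx
      rw [ha] at ih
      have hodd : ((-1 : PadicInt p)) ^ (p - 1 + 1) = -1 := by
        have hp1 : 1 ≤ p := (Fact.out : p.Prime).pos
        rw [show p - 1 + 1 = p by omega, hp.neg_one_pow]
      rw [hodd]
      have h3 : G (-x) = -G (1 - x) := by rw [h2]; ring
      rw [h3]
      have h4 : G x * G (1 - x) = -1 := by simpa using ih
      linear_combination h4
    · have hx0 : x ≠ 0 := fun h => hx (h ▸ dvd_zero _)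
      have h1 : G (x+1) = -x * G x := G_fe_ndvd hGval hGc hx
      have h2 : G (1 - x) = x * G (-x) := by
        have := G_fe_ndvd hGval hGc (fun h => hx (dvd_neg.mp h))
        rwa [show -x + 1 = 1 - x by ring, neg_neg] at this
      have ha1 : 1 ≤ (-x).appr 1 := appr_neg_pos_of_ndvd hx
      rw [appr_neg_succ_of_ndvd hx, h1,
        show (-x).appr 1 - 1 + 1 = (-x).appr 1 by omega]
      have hpow : ((-1 : PadicInt p)) ^ ((-x).appr 1 + 1) = -(-1) ^ ((-x).appr 1) := by
        rw [pow_succ]; ring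
      rw [hpow] at ih
      refine mul_left_cancel₀ hx0 ?_
      linear_combination (-x) * ih + (x * G x) * h2

/-- reflection formula for Morita's p-adic Gamma function: for an odd prime `p`,
any continuous `G : ℤ_p → ℤ_p` with `G n = (-1)ⁿ ∏_{0<j<n, p∤j} j` for positive integers `n`
(i.e. Morita's p-adic Gamma function), and any `x ∈ ℤ_p`,
`Γ_p(x) Γ_p(1-x) = (-1)^{⟨-x⟩_p - 1}` (written as `(-1)^{⟨-x⟩_p + 1}`). -/
theorem stmt10 (p : ℕ) [Fact p.Prime] (hp : Odd p)
    (G : PadicInt p → PadicInt p) (hGc : Continuous G)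
    (hGval : ∀ n : ℕ, 0 < n →
      G n = (-1) ^ n * ∏ j ∈ (Finset.Ico 1 n).filter (fun j => ¬ p ∣ j), (j : PadicInt p))
    (x : PadicInt p) :
    G x * G (1 - x) = (-1) ^ ((-x).appr 1 + 1) := by
  have hd : Dense (Set.range ((↑) : ℕ → PadicInt p)) := PadicInt.denseRange_natCast
  have hf : Continuous (fun x : PadicInt p => G x * G (1 - x)) :=
    hGc.mul (hGc.comp (continuous_const.sub continuous_id))
  have hr : Continuous (fun x : PadicInt p => ((-1 : PadicInt p)) ^ ((-x).appr 1 + 1)) := by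
    rw [continuous_iff_continuousAt]
    intro x
    have hloc : ∀ y : PadicInt p, dist y x < 1 → (-y).appr 1 = (-x).appr 1 := by
      intro y hy
      have hap : (-x).appr 1 < p := by simpa using (-x).appr_lt 1
      refine appr_one_eq hap ?_
      have h1 : (p : PadicInt p) ∣ y - x := by
        rw [← PadicInt.norm_lt_one_iff_dvd]
        rwa [dist_eq_norm] at hy
      have h2 := appr_spec_one (-x)
      rw [show -y - ((-x).appr 1 : PadicInt p) = (-x - (-x).appr 1) - (y - x) by ring]
      exact dvd_sub h2 h1
    refine ContinuousAt.congr
      (continuousAt_const (y := ((-1 : PadicInt p)) ^ ((-x).appr 1 + 1))) ?_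
    have hball : Metric.ball x 1 ∈ nhds x := Metric.ball_mem_nhds x one_pos
    filter_upwards [hball] with y hy
    rw [hloc y (by simpa [Metric.mem_ball] using hy)]
  have heq : (fun x : PadicInt p => G x * G (1 - x))
      = fun x : PadicInt p => (-1) ^ ((-x).appr 1 + 1) := by
    apply Continuous.ext_on hd hf hr
    rintro _ ⟨n, rfl⟩
    exact main_nat hp hGc hGval n
  exact congrFun heq x
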